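/- Let δ be a singular cardinal with cofinality λ. Then there exists a distributivity matrix (on ℕ) of height δ if and only if there exists a distributivity matrix of height λ. -/

import Mathlib

/-- `b ⊆* a`: `b \ a` is finite. -/
def AlmostSubset (b a : Set ℕ) : Prop := (b \ a).Finite

/-- A mad family on ℕ: a maximal almost disjoint family of infinite subsets of ℕ. -/
def IsMadFamily (A : Set (Set ℕ)) : Prop :=
  (∀ a ∈ A, a.Infinite) ∧
  (A.Pairwise fun a a' => (a ∩ a').Finite) ∧
  (∀ b : Set ℕ, b.Infinite → ∃ a ∈ A, (b ∩ a).Infinite)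

/-- `B` refines `A`: every element of `B` is almost included in some element of `A`. -/
def Refines (B A : Set (Set ℕ)) : Prop := ∀ b ∈ B, ∃ a ∈ A, AlmostSubset b a

/-- A distributivity matrix of height `lam`: a refining system of mad families
indexed by the ordinals below `lam`, without common (mad) refinement. -/
def IsDistribMatrix (lam : Ordinal) (A : Ordinal → Set (Set ℕ)) : Prop :=
  (∀ ξ < lam, IsMadFamily (A ξ)) ∧
  (∀ ξ η : Ordinal, ξ ≤ η → η < lam → Refines (A η) (A ξ)) ∧
  ¬ ∃ B : Set (Set ℕ), IsMadFamily B ∧ ∀ ξ < lam, Refines B (A ξ)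

theorem almostSubset_trans {b a' a : Set ℕ} (h1 : AlmostSubset b a') (h2 : AlmostSubset a' a) :
    AlmostSubset b a := by
  refine Set.Finite.subset (h1.union h2) ?_
  intro x hx
  by_cases hxa' : x ∈ a'
  · exact Or.inr ⟨hxa', hx.2⟩
  · exact Or.inl ⟨hx.1, hxa'⟩

theorem refines_trans {C B A : Set (Set ℕ)} (h1 : Refines C B) (h2 : Refines B A) :
    Refines C A := by
  intro c hc
  obtain ⟨b, hb, hcb⟩ := h1 c hc
  obtain ⟨a, ha, hba⟩ := h2 b hb
  exact ⟨a, ha, almostSubset_trans hcb hba⟩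

/-- Transfer a distributivity matrix along a monotone cofinal map. -/
theorem isDistribMatrix_comp (μ ν : Ordinal) (f : Ordinal → Ordinal)
    (hmono : ∀ ξ η : Ordinal, ξ ≤ η → η < ν → f ξ ≤ f η)
    (hlt : ∀ ξ < ν, f ξ < μ)
    (hcof : ∀ η < μ, ∃ ξ < ν, η ≤ f ξ)
    (A : Ordinal → Set (Set ℕ)) (hA : IsDistribMatrix μ A) :
    IsDistribMatrix ν (fun ξ => A (f ξ)) := by
  obtain ⟨hmad, href, hnb⟩ := hA
  refine ⟨fun ξ hξ => hmad _ (hlt ξ hξ), fun ξ η hle hη => href _ _ (hmono ξ η hle hη) (hlt η hη),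
    ?_⟩
  rintro ⟨B, hB, hBref⟩
  refine hnb ⟨B, hB, fun η hη => ?_⟩
  obtain ⟨ξ, hξ, hηf⟩ := hcof η hη
  exact refines_trans (hBref ξ hξ) (href η (f ξ) hηf (hlt ξ hξ))

/-- If `d` is a singular cardinal with cofinality `lam`, then there is a
distributivity matrix of height `d` iff there is one of height `lam`. -/
theorem distribMatrix_height_singular_iff_cof (d lam : Cardinal)
    (hinf : Cardinal.aleph0 ≤ d) (hsing : ¬ d.IsRegular)
    (hcof : d.ord.cof = lam) :
    (∃ A : Ordinal → Set (Set ℕ), IsDistribMatrix d.ord A) ↔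
      (∃ A : Ordinal → Set (Set ℕ), IsDistribMatrix lam.ord A) := by
  obtain ⟨fs, hfs⟩ := Ordinal.exists_fundamental_sequence d.ord
  have hco : d.ord.cof.ord = lam.ord := by rw [hcof]
  -- the extended fundamental sequence
  set f : Ordinal → Ordinal := fun ξ => if h : ξ < lam.ord then fs ξ (hco ▸ h) else 0 with hf
  have hfval : ∀ ξ (h : ξ < lam.ord), f ξ = fs ξ (hco ▸ h) := by
    intro ξ h; simp [hf, h]
  have hfmono : ∀ ξ η : Ordinal, ξ ≤ η → η < lam.ord → f ξ ≤ f η := by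
    intro ξ η hle hη
    rcases eq_or_lt_of_le hle with rfl | hlt
    · exact le_rfl
    · rw [hfval ξ (hlt.trans hη), hfval η hη]
      exact (hfs.strict_mono _ _ hlt).le
  have hflt : ∀ ξ < lam.ord, f ξ < d.ord := by
    intro ξ h
    rw [hfval ξ h]
    have := Ordinal.lt_blsub fs ξ (hco ▸ h)
    rwa [hfs.blsub_eq] at this
  have hfcof : ∀ η < d.ord, ∃ ξ < lam.ord, η ≤ f ξ := by
    intro η h
    have h : η < Ordinal.blsub _ fs := by rw [hfs.blsub_eq]; exact h
    rw [Ordinal.lt_blsub_iff] at h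
    obtain ⟨i, hi, hle⟩ := h
    have hi' : i < lam.ord := hco ▸ hi
    exact ⟨i, hi', by rw [hfval i hi']; exact hle⟩
  -- the pseudo-inverse
  set g : Ordinal → Ordinal := fun η => sInf {ξ | ξ < lam.ord ∧ η ≤ f ξ} with hg
  have hgmem : ∀ η < d.ord, g η ∈ {ξ | ξ < lam.ord ∧ η ≤ f ξ} := by
    intro η h
    apply csInf_mem
    obtain ⟨ξ, hξ, hle⟩ := hfcof η h
    exact ⟨ξ, hξ, hle⟩
  have hgmono : ∀ ξ η : Ordinal, ξ ≤ η → η < d.ord → g ξ ≤ g η := by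
    intro ξ η hle hη
    apply csInf_le_csInf (OrderBot.bddBelow _)
    · obtain ⟨ζ, hζ, hle'⟩ := hfcof η hη
      exact ⟨ζ, hζ, hle'⟩
    · rintro ζ ⟨h1, h2⟩
      exact ⟨h1, hle.trans h2⟩
  have hglt : ∀ η < d.ord, g η < lam.ord := fun η h => (hgmem η h).1
  have hdlim : Order.IsSuccLimit d.ord := Cardinal.isSuccLimit_ord hinf
  have hgcof : ∀ ξ < lam.ord, ∃ η < d.ord, ξ ≤ g η := by
    intro ξ hξ
    refine ⟨f ξ + 1, hdlim.succ_lt (hflt ξ hξ), ?_⟩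
    have hmem := hgmem (f ξ + 1) (hdlim.succ_lt (hflt ξ hξ))
    by_contra hcon
    push_neg at hcon
    have : f (g (f ξ + 1)) ≤ f ξ := hfmono _ _ hcon.le hξ
    have h2 := hmem.2
    have hlt2 : f ξ < f ξ := lt_of_lt_of_le (lt_of_lt_of_le (Order.lt_succ _)
      (by rw [← Ordinal.add_one_eq_succ]; exact h2)) this
    exact lt_irrefl _ hlt2
  constructor
  · rintro ⟨A, hA⟩
    exact ⟨fun ξ => A (f ξ), isDistribMatrix_comp _ _ f hfmono hflt hfcof A hA⟩
  · rintro ⟨A, hA⟩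
    exact ⟨fun η => A (g η), isDistribMatrix_comp _ _ g hgmono hglt hgcof A hA⟩
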